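/- Let 0 < λ'' < λ' < λ_max, let θ*(λ') be the Euclidean projection of Y/λ' onto the dual feasible set ℱ, and set a = (1/2)(Y/λ'' − θ*(λ')), b = Y/λ' − θ*(λ') (b ≠ 0 since λ' < λ_max), v = a − (⟨a,b⟩/‖b‖₂²)·b, and o = θ*(λ') + v. If ‖Bᵢᵀ o‖_{q̄} < 1 − T_{Bᵢᵀ}^{q̄}·‖v‖₂ for some group index i, then every minimizer W* = (w*₁,…,w*_s) of the primal objective f(W) = (1/2)‖Y − Σⱼ Bⱼwⱼ‖₂² + λ''Σⱼ‖wⱼ‖_q satisfies w*ᵢ = 0. -/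

import Mathlib

open scoped ENNReal BigOperators
open Matrix

/-- The vector ℓq norm for q ∈ [1,∞]. -/
noncomputable def lqNorm {n : ℕ} (q : ℝ≥0∞) (x : Fin n → ℝ) : ℝ :=
  if q = ⊤ then ⨆ i, |x i| else (∑ i, |x i| ^ q.toReal) ^ (1 / q.toReal)

/-- The constant `T_A^q`: `(∑ₖ ‖aₖ‖₂^q)^{1/q}` for `q ∈ [1,∞)`,
`maxₖ ‖aₖ‖₂` for `q = ∞`, where `aₖ` is the `k`-th row of `A`. -/
noncomputable def TA {n t : ℕ} (q : ℝ≥0∞) (A : Matrix (Fin n) (Fin t) ℝ) : ℝ :=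
  if q = ⊤ then ⨆ k, Real.sqrt (∑ j, A k j ^ 2)
  else (∑ k, Real.sqrt (∑ j, A k j ^ 2) ^ q.toReal) ^ (1 / q.toReal)

section Aux
variable {n : ℕ} {q qb : ℝ≥0∞}

lemma conj_tri (hq : 1 ≤ q) (hconj : 1 / q + 1 / qb = 1) :
    (q = 1 ∧ qb = ⊤) ∨ (q = ⊤ ∧ qb = 1) ∨
      (q ≠ ⊤ ∧ qb ≠ ⊤ ∧ q.toReal.HolderConjugate qb.toReal) := by
  have hc : q.HolderConjugate qb := ⟨by simpa [one_div] using hconj⟩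
  rcases eq_or_lt_of_le hq with h1 | h1
  · left
    refine ⟨h1.symm, ?_⟩
    have h : qb⁻¹ = 0 := by
      have h4 := ENNReal.HolderConjugate.inv_add_inv_eq_one q qb
      rw [← h1] at h4
      simp only [inv_one] at h4
      have h5 : (1:ℝ≥0∞) + qb⁻¹ = 1 + 0 := by rw [h4, add_zero]
      exact (ENNReal.add_right_inj (by simp)).mp h5
    simpa using h
  rcases eq_or_ne q ⊤ with h2 | h2
  · right; left
    refine ⟨h2, ?_⟩
    have h : qb⁻¹ = 1 := by
      have := ENNReal.HolderConjugate.inv_add_inv_eq_one q qb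
      rw [h2] at this
      simpa using this
    simpa [ENNReal.inv_eq_one] using h
  · right; right
    have hqbne : qb ≠ ⊤ := by
      intro h
      have h3 := ENNReal.HolderConjugate.inv_add_inv_eq_one q qb
      rw [h] at h3
      simp at h3
      have : q = 1 := by simpa [ENNReal.inv_eq_one] using h3
      exact absurd this.symm h1.ne
    refine ⟨h2, hqbne, Real.holderConjugate_iff.mpr ⟨?_, ?_⟩⟩
    · have := (ENNReal.toReal_lt_toReal (by simp) h2).mpr h1
      simpa using this
    · have h3 : q⁻¹ + qb⁻¹ = 1 := ENNReal.HolderConjugate.inv_add_inv_eq_one q qb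
      have hq0 : q ≠ 0 := ENNReal.HolderConjugate.ne_zero q qb
      have hqb0 : qb ≠ 0 := ENNReal.HolderConjugate.ne_zero qb q
      have hfin1 : q⁻¹ ≠ ⊤ := by simpa using hq0
      have hfin2 : qb⁻¹ ≠ ⊤ := by simpa using hqb0
      have := congrArg ENNReal.toReal h3
      rw [ENNReal.toReal_add hfin1 hfin2, ENNReal.toReal_inv, ENNReal.toReal_inv] at this
      simpa using this
end Aux

section Aux2
variable {n : ℕ} {q qb : ℝ≥0∞}

lemma toReal_one_le (hq : 1 ≤ q) (h : q ≠ ⊤) : 1 ≤ q.toReal := by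
  have := (ENNReal.toReal_le_toReal (by simp) h).mpr hq
  simpa using this

lemma lqNorm_nonneg (x : Fin n → ℝ) : 0 ≤ lqNorm q x := by
  unfold lqNorm; split
  · exact Real.iSup_nonneg fun i => abs_nonneg _
  · exact Real.rpow_nonneg
      (Finset.sum_nonneg fun i _ => Real.rpow_nonneg (abs_nonneg _) _) _

lemma lqNorm_add_le (hq : 1 ≤ q) (x y : Fin n → ℝ) :
    lqNorm q (fun k => x k + y k) ≤ lqNorm q x + lqNorm q y := by
  unfold lqNorm
  split
  · apply Real.iSup_le
    · intro i
      calc |x i + y i| ≤ |x i| + |y i| := abs_add_le _ _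
      _ ≤ (⨆ i, |x i|) + ⨆ i, |y i| :=
        add_le_add (le_ciSup (f := fun i => |x i|) (Finite.bddAbove_range _) i)
          (le_ciSup (f := fun i => |y i|) (Finite.bddAbove_range _) i)
    · exact add_nonneg (Real.iSup_nonneg fun i => abs_nonneg _)
        (Real.iSup_nonneg fun i => abs_nonneg _)
  · exact Real.Lp_add_le Finset.univ x y (toReal_one_le hq ‹_›)

lemma lqNorm_const_mul (hq : 1 ≤ q) (c : ℝ) (x : Fin n → ℝ) :
    lqNorm q (fun k => c * x k) = |c| * lqNorm q x := by
  unfold lqNorm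
  split
  · simp_rw [abs_mul]
    exact (Real.mul_iSup_of_nonneg (abs_nonneg c) _).symm
  · have hp : 1 ≤ q.toReal := toReal_one_le hq ‹_›
    have hp0 : q.toReal ≠ 0 := by linarith
    simp_rw [abs_mul, Real.mul_rpow (abs_nonneg _) (abs_nonneg _)]
    rw [← Finset.mul_sum,
      Real.mul_rpow (Real.rpow_nonneg (abs_nonneg _) _)
        (Finset.sum_nonneg fun i _ => Real.rpow_nonneg (abs_nonneg _) _),
      ← Real.rpow_mul (abs_nonneg c), mul_one_div, div_self hp0, Real.rpow_one]

lemma lqNorm_mono (hq : 1 ≤ q) (x y : Fin n → ℝ) (h : ∀ k, |x k| ≤ y k) :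
    lqNorm q x ≤ lqNorm q y := by
  have hy : ∀ k, |x k| ≤ |y k| := fun k => (h k).trans (le_abs_self _)
  unfold lqNorm
  split
  · apply Real.iSup_le
    · intro i
      exact (hy i).trans (le_ciSup (f := fun i => |y i|) (Finite.bddAbove_range _) i)
    · exact Real.iSup_nonneg fun i => abs_nonneg _
  · have hp : 1 ≤ q.toReal := toReal_one_le hq ‹_›
    apply Real.rpow_le_rpow
      (Finset.sum_nonneg fun i _ => Real.rpow_nonneg (abs_nonneg _) _)
    · exact Finset.sum_le_sum fun i _ =>
        Real.rpow_le_rpow (abs_nonneg _) (hy i) (by linarith)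
    · positivity

lemma lqNorm_pos (hq : 1 ≤ q) {x : Fin n → ℝ} (hx : x ≠ 0) : 0 < lqNorm q x := by
  obtain ⟨k, hk⟩ := Function.ne_iff.mp hx
  have hk' : 0 < |x k| := abs_pos.mpr hk
  unfold lqNorm
  split
  · exact hk'.trans_le (le_ciSup (f := fun i => |x i|) (Finite.bddAbove_range _) k)
  · have hp : 1 ≤ q.toReal := toReal_one_le hq ‹_›
    apply Real.rpow_pos_of_pos
    apply Finset.sum_pos' (fun i _ => Real.rpow_nonneg (abs_nonneg _) _)
    exact ⟨k, Finset.mem_univ k, Real.rpow_pos_of_pos hk' _⟩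

lemma lqNorm_zero_eq (hq : 1 ≤ q) (x : Fin n → ℝ) (hx : ∀ k, x k = 0) :
    lqNorm q x = 0 := by
  unfold lqNorm
  split
  · refine le_antisymm (Real.iSup_nonpos fun i => by simp [hx i]) ?_
    exact Real.iSup_nonneg fun i => abs_nonneg _
  · have hp : 1 ≤ q.toReal := toReal_one_le hq ‹_›
    have hp0 : q.toReal ≠ 0 := by linarith
    rw [Finset.sum_eq_zero fun i _ => by simp [hx i, Real.zero_rpow hp0]]
    exact Real.zero_rpow (by simpa using hp0)
end Aux2

section Aux3
variable {n : ℕ} {q qb : ℝ≥0∞}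

lemma lqNorm_top (x : Fin n → ℝ) : lqNorm ⊤ x = ⨆ i, |x i| := if_pos rfl

lemma lqNorm_ne_top (h : q ≠ ⊤) (x : Fin n → ℝ) :
    lqNorm q x = (∑ i, |x i| ^ q.toReal) ^ (1 / q.toReal) := if_neg h

lemma lqNorm_one (x : Fin n → ℝ) : lqNorm 1 x = ∑ i, |x i| := by
  rw [lqNorm_ne_top (by simp)]
  simp [Real.rpow_one]

lemma lqNorm_inner_le (hq : 1 ≤ q) (hconj : 1 / q + 1 / qb = 1) (x u : Fin n → ℝ) :
    ∑ k, x k * u k ≤ lqNorm qb x * lqNorm q u := by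
  rcases conj_tri hq hconj with ⟨hq1, hqb⟩ | ⟨hq1, hqb⟩ | ⟨hq1, hqb, hc⟩
  · subst hq1; subst hqb
    rw [lqNorm_top, lqNorm_one, Finset.mul_sum]
    apply Finset.sum_le_sum
    intro k _
    calc x k * u k ≤ |x k * u k| := le_abs_self _
    _ = |x k| * |u k| := abs_mul _ _
    _ ≤ (⨆ i, |x i|) * |u k| :=
      mul_le_mul_of_nonneg_right
        (le_ciSup (f := fun i => |x i|) (Finite.bddAbove_range _) k) (abs_nonneg _)
  · subst hq1; subst hqb
    rw [lqNorm_top, lqNorm_one, Finset.sum_mul]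
    apply Finset.sum_le_sum
    intro k _
    calc x k * u k ≤ |x k * u k| := le_abs_self _
    _ = |x k| * |u k| := abs_mul _ _
    _ ≤ |x k| * ⨆ i, |u i| :=
      mul_le_mul_of_nonneg_left
        (le_ciSup (f := fun i => |u i|) (Finite.bddAbove_range _) k) (abs_nonneg _)
  · rw [lqNorm_ne_top hq1, lqNorm_ne_top hqb]
    exact Real.inner_le_Lp_mul_Lq Finset.univ x u hc.symm

lemma lqNorm_dual_le_one (hq : 1 ≤ q) (hconj : 1 / q + 1 / qb = 1) (x : Fin n → ℝ)
    (h : ∀ u : Fin n → ℝ, ∑ k, x k * u k ≤ lqNorm q u) : lqNorm qb x ≤ 1 := by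
  rcases conj_tri hq hconj with ⟨hq1, hqb⟩ | ⟨hq1, hqb⟩ | ⟨hq1, hqb, hc⟩
  · subst hq1; subst hqb
    rw [lqNorm_top]
    apply Real.iSup_le _ zero_le_one
    intro k
    set u : Fin n → ℝ := fun j => if j = k then (if 0 ≤ x k then 1 else -1) else 0 with hu
    have hsum : ∑ j, x j * u j = |x k| := by
      rw [Finset.sum_eq_single k]
      · simp only [hu, if_pos rfl]
        split
        · rw [abs_of_nonneg ‹_›]; ring
        · rw [abs_of_neg (by linarith [not_le.mp ‹¬ 0 ≤ x k›])]; ring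
      · intro j _ hj; simp [hu, hj]
      · intro hk; exact absurd (Finset.mem_univ k) hk
    have hn : lqNorm 1 u = 1 := by
      rw [lqNorm_one, Finset.sum_eq_single k]
      · simp only [hu, if_pos rfl]; split <;> simp
      · intro j _ hj; simp [hu, hj]
      · intro hk; exact absurd (Finset.mem_univ k) hk
    have := h u
    rw [hsum, hn] at this
    exact this
  · subst hq1; subst hqb
    rw [lqNorm_one]
    set u : Fin n → ℝ := fun j => if 0 ≤ x j then 1 else -1 with hu
    have hsum : ∑ j, x j * u j = ∑ j, |x j| := by
      apply Finset.sum_congr rfl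
      intro j _
      simp only [hu]
      split
      · rw [abs_of_nonneg ‹_›]; ring
      · rw [abs_of_neg (by linarith [not_le.mp ‹¬ 0 ≤ x j›])]; ring
    have hn : lqNorm ⊤ u ≤ 1 := by
      rw [lqNorm_top]
      apply Real.iSup_le _ zero_le_one
      intro j
      simp only [hu]
      split <;> simp
    have := h u
    rw [hsum] at this
    exact this.trans hn
  · have hc' : qb.toReal.HolderConjugate q.toReal := hc.symm
    set p := qb.toReal
    set r := q.toReal
    set S := ∑ k, |x k| ^ p with hS
    have hp1 : 1 < p := hc'.lt
    have hr1 : 1 < r := hc.lt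
    set u : Fin n → ℝ := fun k => (if 0 ≤ x k then 1 else -1) * |x k| ^ (p - 1) with hu
    have key1 : ∀ k, x k * u k = |x k| ^ p := by
      intro k
      rcases eq_or_ne (x k) 0 with h0 | h0
      · simp [hu, h0, Real.zero_rpow (by linarith : p - 1 ≠ 0),
          Real.zero_rpow (by linarith : p ≠ 0)]
      · have hxpos : 0 < |x k| := abs_pos.mpr h0
        have : x k * u k = |x k| * |x k| ^ (p - 1) := by
          simp only [hu]
          split
          · rw [abs_of_nonneg ‹_›]; ring
          · rw [abs_of_neg (by linarith [not_le.mp ‹¬ 0 ≤ x k›])]; ring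
        rw [this]
        have h2 : |x k| ^ p = |x k| ^ (1 + (p - 1)) := by norm_num
        rw [h2, Real.rpow_add hxpos, Real.rpow_one]
    have key2 : ∀ k, |u k| = |x k| ^ (p - 1) := by
      intro k
      simp only [hu, abs_mul]
      rw [abs_of_nonneg (Real.rpow_nonneg (abs_nonneg _) _)]
      split <;> simp
    have key3 : ∑ k, |u k| ^ r = S := by
      apply Finset.sum_congr rfl
      intro k _
      rw [key2, ← Real.rpow_mul (abs_nonneg _), hc'.sub_one_mul_conj]
    have hnu : lqNorm q u = S ^ (1 / r) := by
      rw [lqNorm_ne_top hq1, key3]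
    have hhu := h u
    have hsum : ∑ k, x k * u k = S := Finset.sum_congr rfl fun k _ => key1 k
    rw [hsum, hnu] at hhu
    have hS0 : 0 ≤ S := Finset.sum_nonneg fun k _ => Real.rpow_nonneg (abs_nonneg _) _
    have hS1 : S ≤ 1 := by
      by_contra hgt
      push_neg at hgt
      have hlt : S ^ (1 / r) < S ^ (1 : ℝ) :=
        Real.rpow_lt_rpow_of_exponent_lt hgt
          (by rw [div_lt_one (by linarith)]; exact hr1)
      rw [Real.rpow_one] at hlt
      linarith
    rw [lqNorm_ne_top hqb]
    calc (∑ k, |x k| ^ p) ^ (1 / p) = S ^ (1 / p) := by rw [hS]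
    _ ≤ 1 := Real.rpow_le_one hS0 hS1 (by positivity)
end Aux3

section Aux4
variable {n t : ℕ} {q qb : ℝ≥0∞}

lemma TA_eq_lqNorm (M : Matrix (Fin t) (Fin n) ℝ) :
    TA q M = lqNorm q (fun k => Real.sqrt (∑ j, M k j ^ 2)) := by
  unfold TA lqNorm
  split
  · simp only [abs_of_nonneg (Real.sqrt_nonneg _)]
  · congr 1
    apply Finset.sum_congr rfl
    intro k _
    rw [abs_of_nonneg (Real.sqrt_nonneg _)]

lemma TA_nonneg (hqb : 1 ≤ qb) (M : Matrix (Fin t) (Fin n) ℝ) : 0 ≤ TA qb M := by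
  rw [TA_eq_lqNorm]; exact lqNorm_nonneg _

lemma lqNorm_mulVec_le (hqb : 1 ≤ qb) (M : Matrix (Fin t) (Fin n) ℝ) (u : Fin n → ℝ) :
    lqNorm qb (M.mulVec u) ≤ TA qb M * Real.sqrt (∑ k, u k ^ 2) := by
  set c := Real.sqrt (∑ k, u k ^ 2) with hc
  have hc0 : 0 ≤ c := Real.sqrt_nonneg _
  have key : ∀ k, |M.mulVec u k| ≤ Real.sqrt (∑ j, M k j ^ 2) * c := by
    intro k
    have cs := Finset.sum_mul_sq_le_sq_mul_sq Finset.univ (fun j => M k j) u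
    have habs : |M.mulVec u k| = Real.sqrt ((∑ j, M k j * u j) ^ 2) := by
      rw [Real.sqrt_sq_eq_abs]; rfl
    rw [habs, hc, ← Real.sqrt_mul (Finset.sum_nonneg fun j _ => sq_nonneg _)]
    exact Real.sqrt_le_sqrt cs
  calc lqNorm qb (M.mulVec u)
      ≤ lqNorm qb (fun k => c * Real.sqrt (∑ j, M k j ^ 2)) := by
        apply lqNorm_mono hqb
        intro k
        exact (key k).trans_eq (mul_comm _ _)
  _ = |c| * lqNorm qb (fun k => Real.sqrt (∑ j, M k j ^ 2)) := lqNorm_const_mul hqb c _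
  _ = TA qb M * c := by rw [abs_of_nonneg hc0, TA_eq_lqNorm]; ring

lemma nonneg_of_small (c K : ℝ) (hK : 0 ≤ K)
    (h : ∀ t : ℝ, 0 < t → t ≤ 1 → -(t * K) ≤ c) : 0 ≤ c := by
  by_contra hc
  push_neg at hc
  set t := min 1 (-c / (2 * (K + 1))) with ht
  have h1 : 0 < -c / (2 * (K + 1)) := div_pos (by linarith) (by linarith)
  have ht0 : 0 < t := lt_min zero_lt_one h1
  have ht1 : t ≤ 1 := min_le_left _ _
  have h2 := h t ht0 ht1
  have htK : t * K ≤ -c / (2 * (K + 1)) * K :=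
    mul_le_mul_of_nonneg_right (min_le_right _ _) hK
  have h3 : -c / (2 * (K + 1)) * K ≤ -c / 2 := by
    rw [div_mul_eq_mul_div, div_le_div_iff₀ (by linarith) two_pos]
    nlinarith
  linarith

lemma proj_vi {m : ℕ} (F : (Fin m → ℝ) → Prop)
    (hFconv : ∀ θ₁ θ₂, F θ₁ → F θ₂ → ∀ t : ℝ, 0 ≤ t → t ≤ 1 →
      F (fun k => θ₁ k + t * (θ₂ k - θ₁ k)))
    (c θ₀ : Fin m → ℝ) (hθ₀ : F θ₀)
    (hmin : ∀ θ, F θ → ∑ k, (c k - θ₀ k) ^ 2 ≤ ∑ k, (c k - θ k) ^ 2)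
    (θ : Fin m → ℝ) (hθ : F θ) :
    ∑ k, (c k - θ₀ k) * (θ k - θ₀ k) ≤ 0 := by
  set I := ∑ k, (c k - θ₀ k) * (θ k - θ₀ k) with hI
  set K := ∑ k, (θ k - θ₀ k) ^ 2 with hK
  have hK0 : 0 ≤ K := Finset.sum_nonneg fun k _ => sq_nonneg _
  have expand : ∀ s : ℝ, ∑ k, (c k - (θ₀ k + s * (θ k - θ₀ k))) ^ 2
      = ∑ k, (c k - θ₀ k) ^ 2 - 2 * s * I + s ^ 2 * K := by
    intro s
    have hpt : ∀ k : Fin m, (c k - (θ₀ k + s * (θ k - θ₀ k))) ^ 2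
        = (c k - θ₀ k) ^ 2 - 2 * s * ((c k - θ₀ k) * (θ k - θ₀ k))
          + s ^ 2 * (θ k - θ₀ k) ^ 2 := fun k => by ring
    rw [Finset.sum_congr rfl fun k _ => hpt k, Finset.sum_add_distrib,
      Finset.sum_sub_distrib, ← Finset.mul_sum, ← Finset.mul_sum, ← hI, ← hK]
  have key : 0 ≤ -I := by
    apply nonneg_of_small (-I) (K / 2) (by linarith)
    intro s hs0 hs1
    have hmem := hmin _ (hFconv θ₀ θ hθ₀ hθ s hs0.le hs1)
    rw [expand s] at hmem
    nlinarith
  linarith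
end Aux4

section Aux5

lemma sum_update_eq {s : ℕ} {p : Fin s → ℕ} (W : (j : Fin s) → Fin (p j) → ℝ)
    (j : Fin s) (w : Fin (p j) → ℝ) (G : (j' : Fin s) → (Fin (p j') → ℝ) → ℝ) :
    ∑ j', G j' (Function.update W j w j')
      = ∑ j', G j' (W j') + G j w - G j (W j) := by
  have h : ∀ j', G j' (Function.update W j w j')
      = Function.update (fun j' => G j' (W j')) j (G j w) j' := by
    intro j'
    rcases eq_or_ne j' j with rfl | hne
    · simp
    · simp [Function.update_of_ne hne]
  rw [Finset.sum_congr rfl fun j' _ => h j',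
    Finset.sum_update_of_mem (Finset.mem_univ j)]
  have h2 : ∑ j', G j' (W j')
      = G j (W j) + ∑ j' ∈ Finset.univ.erase j, G j' (W j') :=
    (Finset.add_sum_erase _ _ (Finset.mem_univ j)).symm
  rw [h2, Finset.erase_eq]
  ring

lemma mulVec_comb {n t : ℕ} (M : Matrix (Fin n) (Fin t) ℝ) (c₁ c₂ : ℝ)
    (v₁ v₂ : Fin t → ℝ) (k : Fin n) :
    M.mulVec (fun x => c₁ * v₁ x + c₂ * v₂ x) k
      = c₁ * M.mulVec v₁ k + c₂ * M.mulVec v₂ k := by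
  simp only [Matrix.mulVec, dotProduct]
  rw [Finset.mul_sum, Finset.mul_sum, ← Finset.sum_add_distrib]
  apply Finset.sum_congr rfl
  intro x _
  ring

lemma adjsum {n t : ℕ} (M : Matrix (Fin n) (Fin t) ℝ) (θ : Fin n → ℝ) (u : Fin t → ℝ) :
    ∑ k, θ k * M.mulVec u k = ∑ x, Mᵀ.mulVec θ x * u x := by
  simp only [Matrix.mulVec, dotProduct, Matrix.transpose_apply,
    Finset.mul_sum, Finset.sum_mul]
  rw [Finset.sum_comm]
  apply Finset.sum_congr rfl
  intro x _
  apply Finset.sum_congr rfl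
  intro k _
  ring

end Aux5

section Aux6

lemma mulVec_smul'' {n t : ℕ} (M : Matrix (Fin n) (Fin t) ℝ) (c : ℝ)
    (v : Fin t → ℝ) (k : Fin n) :
    M.mulVec (fun x => c * v x) k = c * M.mulVec v k := by
  simp only [Matrix.mulVec, dotProduct]
  rw [Finset.mul_sum]
  apply Finset.sum_congr rfl
  intro x _
  ring

lemma mulVec_add'' {n t : ℕ} (M : Matrix (Fin n) (Fin t) ℝ)
    (v w : Fin t → ℝ) (k : Fin n) :
    M.mulVec (fun x => v x + w x) k = M.mulVec v k + M.mulVec w k := by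
  simp only [Matrix.mulVec, dotProduct]
  rw [← Finset.sum_add_distrib]
  apply Finset.sum_congr rfl
  intro x _
  ring

end Aux6

/-- Screening rule: let `0 < λ'' < λ' < λ_max`, let `θ*(λ')` be the Euclidean
projection of `Y/λ'` onto the dual feasible set `ℱ`, and set
`a = (1/2)(Y/λ'' − θ*(λ'))`, `b = Y/λ' − θ*(λ')`,
`v = a − (⟨a,b⟩/‖b‖₂²)·b`, `o = θ*(λ') + v`.  If
`‖Bᵢᵀ o‖_{q̄} < 1 − T_{Bᵢᵀ}^{q̄}·‖v‖₂` for some group index `i`, then every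
minimizer `W*` of `f(W) = (1/2)‖Y − Σⱼ Bⱼwⱼ‖₂² + λ''Σⱼ‖wⱼ‖_q` satisfies
`w*ᵢ = 0`. -/
theorem stmt19 {m s : ℕ} [NeZero s] (p : Fin s → ℕ)
    (B : (i : Fin s) → Matrix (Fin m) (Fin (p i)) ℝ) (Y : Fin m → ℝ)
    (q qb : ℝ≥0∞) (hq : 1 ≤ q) (hconj : 1 / q + 1 / qb = 1)
    (lam' lam'' : ℝ) (h0 : 0 < lam'') (h1 : lam'' < lam')
    (h2 : lam' < Finset.univ.sup' Finset.univ_nonempty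
        (fun i => lqNorm qb ((B i)ᵀ.mulVec Y)))
    (θp : Fin m → ℝ)
    (hθpF : ∀ i, lqNorm qb ((B i)ᵀ.mulVec θp) ≤ 1)
    (hθpProj : ∀ θ : Fin m → ℝ, (∀ i, lqNorm qb ((B i)ᵀ.mulVec θ) ≤ 1) →
      ∑ k, (Y k / lam' - θp k) ^ 2 ≤ ∑ k, (Y k / lam' - θ k) ^ 2)
    (i : Fin s) :
    let a : Fin m → ℝ := fun k => 1 / 2 * (Y k / lam'' - θp k)
    let b : Fin m → ℝ := fun k => Y k / lam' - θp k
    let vv : Fin m → ℝ := fun k =>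
      a k - ((∑ j, a j * b j) / ∑ j, b j ^ 2) * b k
    let o : Fin m → ℝ := fun k => θp k + vv k
    lqNorm qb ((B i)ᵀ.mulVec o) <
        1 - TA qb (B i)ᵀ * Real.sqrt (∑ k, vv k ^ 2) →
      ∀ W : (j : Fin s) → Fin (p j) → ℝ,
        (∀ W' : (j : Fin s) → Fin (p j) → ℝ,
          (1 / 2) * ∑ k, (Y k - ∑ j, (B j).mulVec (W j) k) ^ 2 +
              lam'' * ∑ j, lqNorm q (W j) ≤
            (1 / 2) * ∑ k, (Y k - ∑ j, (B j).mulVec (W' j) k) ^ 2 +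
              lam'' * ∑ j, lqNorm q (W' j)) →
        W i = 0 := by
  intro a b vv o hscr W hmin
  have ha : ∀ k, a k = 1 / 2 * (Y k / lam'' - θp k) := fun k => rfl
  have hb : ∀ k, b k = Y k / lam' - θp k := fun k => rfl
  have hvv : ∀ k, vv k = a k - ((∑ j, a j * b j) / ∑ j, b j ^ 2) * b k := fun k => rfl
  have ho : ∀ k, o k = θp k + vv k := fun k => rfl
  have hlam' : 0 < lam' := h0.trans h1
  have hc : q.HolderConjugate qb := ⟨by simpa [one_div] using hconj⟩
  have hqb : 1 ≤ qb := ENNReal.HolderConjugate.one_le qb q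
  set R : Fin m → ℝ := fun k => Y k - ∑ j, (B j).mulVec (W j) k with hR
  set θd : Fin m → ℝ := fun k => R k / lam'' with hθd
  have hfmin : ∀ (j : Fin s) (w : Fin (p j) → ℝ),
      0 ≤ (∑ k, R k * ((B j).mulVec (W j) k - (B j).mulVec w k))
        + (1 / 2) * (∑ k, ((B j).mulVec w k - (B j).mulVec (W j) k) ^ 2)
        + lam'' * (lqNorm q w - lqNorm q (W j)) := by
    intro j w
    have h := hmin (Function.update W j w)
    have hres : ∀ k : Fin m, ∑ j', (B j').mulVec (Function.update W j w j') k
        = (∑ j', (B j').mulVec (W j') k)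
          + ((B j).mulVec w k - (B j).mulVec (W j) k) := by
      intro k
      have h' := sum_update_eq W j w (fun j' v => (B j').mulVec v k)
      rw [h']
      ring
    have hnorm : ∑ j', lqNorm q (Function.update W j w j')
        = (∑ j', lqNorm q (W j')) + (lqNorm q w - lqNorm q (W j)) := by
      have h' := sum_update_eq W j w (fun j' v => lqNorm q v)
      rw [h']
      ring
    simp only [hres, hnorm] at h
    have hpt : ∀ k : Fin m,
        (Y k - ((∑ j', (B j').mulVec (W j') k)
          + ((B j).mulVec w k - (B j).mulVec (W j) k))) ^ 2
        = (Y k - ∑ j', (B j').mulVec (W j') k) ^ 2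
          - 2 * ((Y k - ∑ j', (B j').mulVec (W j') k)
              * ((B j).mulVec w k - (B j).mulVec (W j) k))
          + ((B j).mulVec w k - (B j).mulVec (W j) k) ^ 2 := fun k => by ring
    rw [Finset.sum_congr rfl fun k _ => hpt k, Finset.sum_add_distrib,
      Finset.sum_sub_distrib, ← Finset.mul_sum] at h
    have hflip : ∑ k, R k * ((B j).mulVec (W j) k - (B j).mulVec w k)
        = - ∑ k, (Y k - ∑ j', (B j').mulVec (W j') k)
            * ((B j).mulVec w k - (B j).mulVec (W j) k) := by
      rw [← Finset.sum_neg_distrib]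
      apply Finset.sum_congr rfl
      intro k _
      simp only [hR]
      ring
    rw [hflip]
    linarith
  have hgrad_ge : ∀ j : Fin s,
      lam'' * lqNorm q (W j) ≤ ∑ k, R k * (B j).mulVec (W j) k := by
    intro j
    have key := nonneg_of_small
      ((∑ k, R k * (B j).mulVec (W j) k) - lam'' * lqNorm q (W j))
      ((1 / 2) * ∑ k, (B j).mulVec (W j) k ^ 2)
      (by positivity) ?_
    · linarith
    intro t ht0 ht1
    have h1 := hfmin j (fun x => (1 - t) * W j x)
    have e0 : ∀ k, (B j).mulVec (fun x => (1 - t) * W j x) k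
        = (1 - t) * (B j).mulVec (W j) k := fun k => mulVec_smul'' (B j) (1 - t) (W j) k
    have e1 : ∑ k, R k * ((B j).mulVec (W j) k
          - (B j).mulVec (fun x => (1 - t) * W j x) k)
        = t * ∑ k, R k * (B j).mulVec (W j) k := by
      rw [Finset.mul_sum]
      apply Finset.sum_congr rfl
      intro k _
      rw [e0 k]
      ring
    have e2 : ∑ k, ((B j).mulVec (fun x => (1 - t) * W j x) k
          - (B j).mulVec (W j) k) ^ 2
        = t ^ 2 * ∑ k, (B j).mulVec (W j) k ^ 2 := by
      rw [Finset.mul_sum]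
      apply Finset.sum_congr rfl
      intro k _
      rw [e0 k]
      ring
    have e3 : lqNorm q (fun x => (1 - t) * W j x) = (1 - t) * lqNorm q (W j) := by
      rw [lqNorm_const_mul hq, abs_of_nonneg (by linarith)]
    rw [e1, e2, e3] at h1
    have h2 : 0 ≤ t * (((∑ k, R k * (B j).mulVec (W j) k) - lam'' * lqNorm q (W j))
        + t * ((1 / 2) * ∑ k, (B j).mulVec (W j) k ^ 2)) := by nlinarith [h1]
    have h3 : t * 0 ≤ t * (((∑ k, R k * (B j).mulVec (W j) k) - lam'' * lqNorm q (W j))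
        + t * ((1 / 2) * ∑ k, (B j).mulVec (W j) k ^ 2)) := by simpa using h2
    have h4 := le_of_mul_le_mul_left h3 ht0
    linarith
  have hgrad_le : ∀ (j : Fin s) (u : Fin (p j) → ℝ),
      ∑ k, R k * (B j).mulVec u k ≤ lam'' * lqNorm q u := by
    intro j u
    have key := nonneg_of_small
      (lam'' * lqNorm q u - ∑ k, R k * (B j).mulVec u k)
      ((1 / 2) * ∑ k, (B j).mulVec u k ^ 2)
      (by positivity) ?_
    · linarith
    intro t ht0 ht1
    have h1 := hfmin j (fun x => W j x + t * u x)
    have e0 : ∀ k, (B j).mulVec (fun x => W j x + t * u x) k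
        = (B j).mulVec (W j) k + t * (B j).mulVec u k := by
      intro k
      rw [mulVec_add'' (B j) (W j) (fun x => t * u x) k, mulVec_smul'' (B j) t u k]
    have e1 : ∑ k, R k * ((B j).mulVec (W j) k
          - (B j).mulVec (fun x => W j x + t * u x) k)
        = -(t * ∑ k, R k * (B j).mulVec u k) := by
      rw [Finset.mul_sum, ← Finset.sum_neg_distrib]
      apply Finset.sum_congr rfl
      intro k _
      rw [e0 k]
      ring
    have e2 : ∑ k, ((B j).mulVec (fun x => W j x + t * u x) k
          - (B j).mulVec (W j) k) ^ 2
        = t ^ 2 * ∑ k, (B j).mulVec u k ^ 2 := by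
      rw [Finset.mul_sum]
      apply Finset.sum_congr rfl
      intro k _
      rw [e0 k]
      ring
    have e3 : lqNorm q (fun x => W j x + t * u x)
        ≤ lqNorm q (W j) + t * lqNorm q u := by
      calc lqNorm q (fun x => W j x + t * u x)
          ≤ lqNorm q (W j) + lqNorm q (fun x => t * u x) :=
            lqNorm_add_le hq (W j) (fun x => t * u x)
      _ = lqNorm q (W j) + t * lqNorm q u := by
          rw [lqNorm_const_mul hq, abs_of_nonneg ht0.le]
    rw [e1, e2] at h1
    have h1' : 0 ≤ -(t * ∑ k, R k * (B j).mulVec u k)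
        + 1 / 2 * (t ^ 2 * ∑ k, (B j).mulVec u k ^ 2)
        + lam'' * (t * lqNorm q u) := by
      have := mul_le_mul_of_nonneg_left
        (by linarith [e3] : lqNorm q (fun x => W j x + t * u x) - lqNorm q (W j)
          ≤ t * lqNorm q u) h0.le
      linarith
    have h2 : 0 ≤ t * ((lam'' * lqNorm q u - ∑ k, R k * (B j).mulVec u k)
        + t * ((1 / 2) * ∑ k, (B j).mulVec u k ^ 2)) := by nlinarith [h1']
    have h3 : t * 0 ≤ t * ((lam'' * lqNorm q u - ∑ k, R k * (B j).mulVec u k)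
        + t * ((1 / 2) * ∑ k, (B j).mulVec u k ^ 2)) := by simpa using h2
    have h4 := le_of_mul_le_mul_left h3 ht0
    linarith
  have hFconv : ∀ θ₁ θ₂ : Fin m → ℝ,
      (∀ j, lqNorm qb ((B j)ᵀ.mulVec θ₁) ≤ 1) →
      (∀ j, lqNorm qb ((B j)ᵀ.mulVec θ₂) ≤ 1) →
      ∀ t : ℝ, 0 ≤ t → t ≤ 1 →
      (∀ j, lqNorm qb ((B j)ᵀ.mulVec (fun k => θ₁ k + t * (θ₂ k - θ₁ k))) ≤ 1) := by
    intro θ₁ θ₂ h₁ h₂ t ht0 ht1 j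
    have heq : (B j)ᵀ.mulVec (fun k => θ₁ k + t * (θ₂ k - θ₁ k))
        = fun x => (1 - t) * (B j)ᵀ.mulVec θ₁ x + t * (B j)ᵀ.mulVec θ₂ x := by
      funext x
      have e1 : (fun k => θ₁ k + t * (θ₂ k - θ₁ k))
          = fun k => (1 - t) * θ₁ k + t * θ₂ k := by funext k; ring
      rw [e1, mulVec_comb]
    rw [heq]
    calc lqNorm qb (fun x => (1 - t) * (B j)ᵀ.mulVec θ₁ x + t * (B j)ᵀ.mulVec θ₂ x)
        ≤ lqNorm qb (fun x => (1 - t) * (B j)ᵀ.mulVec θ₁ x)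
          + lqNorm qb (fun x => t * (B j)ᵀ.mulVec θ₂ x) := lqNorm_add_le hqb _ _
    _ = (1 - t) * lqNorm qb ((B j)ᵀ.mulVec θ₁) + t * lqNorm qb ((B j)ᵀ.mulVec θ₂) := by
        rw [lqNorm_const_mul hqb, lqNorm_const_mul hqb,
          abs_of_nonneg (by linarith : (0:ℝ) ≤ 1 - t), abs_of_nonneg ht0]
    _ ≤ (1 - t) * 1 + t * 1 :=
        add_le_add (mul_le_mul_of_nonneg_left (h₁ j) (by linarith))
          (mul_le_mul_of_nonneg_left (h₂ j) ht0)
    _ = 1 := by ring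
  have hVIp : ∀ θ : Fin m → ℝ, (∀ j, lqNorm qb ((B j)ᵀ.mulVec θ) ≤ 1) →
      ∑ k, (Y k / lam' - θp k) * (θ k - θp k) ≤ 0 := by
    intro θ hθ
    exact proj_vi (fun θ => ∀ j, lqNorm qb ((B j)ᵀ.mulVec θ) ≤ 1) hFconv
      (fun k => Y k / lam') θp hθpF hθpProj θ hθ
  have hθdF : ∀ j, lqNorm qb ((B j)ᵀ.mulVec θd) ≤ 1 := by
    intro j
    apply lqNorm_dual_le_one hq hconj
    intro u
    have h1 := hgrad_le j u
    have h2 : ∑ x, (B j)ᵀ.mulVec θd x * u x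
        = (1 / lam'') * ∑ k, R k * (B j).mulVec u k := by
      rw [← adjsum, Finset.mul_sum]
      apply Finset.sum_congr rfl
      intro k _
      simp only [hθd]
      ring
    rw [h2]
    have h3 : (1 / lam'') * (∑ k, R k * (B j).mulVec u k)
        ≤ (1 / lam'') * (lam'' * lqNorm q u) :=
      mul_le_mul_of_nonneg_left h1 (by positivity)
    rw [← mul_assoc, one_div_mul_cancel h0.ne', one_mul] at h3
    exact h3
  have hVId : ∑ k, (Y k / lam'' - θd k) * (θp k - θd k) ≤ 0 := by
    have hkey : ∀ k, Y k / lam'' - θd k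
        = (1 / lam'') * ∑ j, (B j).mulVec (W j) k := by
      intro k
      simp only [hθd, hR]
      ring
    have hterm : ∀ j : Fin s, ∑ k, (θp k - θd k) * (B j).mulVec (W j) k ≤ 0 := by
      intro j
      have hsub : ∑ k, (θp k - θd k) * (B j).mulVec (W j) k
          = (∑ k, θp k * (B j).mulVec (W j) k)
            - ∑ k, θd k * (B j).mulVec (W j) k := by
        rw [← Finset.sum_sub_distrib]
        apply Finset.sum_congr rfl
        intro k _
        ring
      have hup : ∑ k, θp k * (B j).mulVec (W j) k ≤ lqNorm q (W j) := by
        rw [adjsum]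
        calc ∑ x, (B j)ᵀ.mulVec θp x * W j x
            ≤ lqNorm qb ((B j)ᵀ.mulVec θp) * lqNorm q (W j) :=
              lqNorm_inner_le hq hconj _ _
        _ ≤ 1 * lqNorm q (W j) :=
              mul_le_mul_of_nonneg_right (hθpF j) (lqNorm_nonneg _)
        _ = lqNorm q (W j) := one_mul _
      have hdn : lqNorm q (W j) ≤ ∑ k, θd k * (B j).mulVec (W j) k := by
        have h1 := hgrad_ge j
        have h2 : ∑ k, θd k * (B j).mulVec (W j) k
            = (1 / lam'') * ∑ k, R k * (B j).mulVec (W j) k := by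
          rw [Finset.mul_sum]
          apply Finset.sum_congr rfl
          intro k _
          simp only [hθd]
          ring
        rw [h2]
        have h3 : (1 / lam'') * (lam'' * lqNorm q (W j))
            ≤ (1 / lam'') * ∑ k, R k * (B j).mulVec (W j) k :=
          mul_le_mul_of_nonneg_left h1 (by positivity)
        rw [← mul_assoc, one_div_mul_cancel h0.ne', one_mul] at h3
        exact h3
      linarith
    have hswap : ∑ k, ((1 / lam'') * ∑ j, (B j).mulVec (W j) k) * (θp k - θd k)
        = (1 / lam'') * ∑ j, ∑ k, (θp k - θd k) * (B j).mulVec (W j) k := by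
      have e : ∀ k : Fin m, ((1 / lam'') * ∑ j, (B j).mulVec (W j) k) * (θp k - θd k)
          = (1 / lam'') * ∑ j, (θp k - θd k) * (B j).mulVec (W j) k := by
        intro k
        have e2 : ∑ j, (θp k - θd k) * (B j).mulVec (W j) k
            = (θp k - θd k) * ∑ j, (B j).mulVec (W j) k := (Finset.mul_sum _ _ _).symm
        rw [e2]
        ring
      rw [Finset.sum_congr rfl fun k _ => e k, ← Finset.mul_sum, Finset.sum_comm]
    rw [Finset.sum_congr rfl fun k _ => by rw [hkey k], hswap]
    exact mul_nonpos_of_nonneg_of_nonpos (by positivity)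
      (Finset.sum_nonpos fun j _ => hterm j)
  have hbb : (0:ℝ) ≤ ∑ k, b k ^ 2 := Finset.sum_nonneg fun k _ => sq_nonneg _
  have hbθp : 0 ≤ ∑ k, b k * θp k := by
    have hz : ∀ j, lqNorm qb ((B j)ᵀ.mulVec (fun _ => (0:ℝ))) ≤ 1 := by
      intro j
      rw [lqNorm_zero_eq hqb _ (fun x => by
        simp [Matrix.mulVec, dotProduct])]
      exact zero_le_one
    have h4 := hVIp (fun _ => (0:ℝ)) hz
    have h5 : ∑ k, (Y k / lam' - θp k) * ((fun _ => (0:ℝ)) k - θp k)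
        = - ∑ k, b k * θp k := by
      rw [← Finset.sum_neg_distrib]
      apply Finset.sum_congr rfl
      intro k _
      rw [hb k]
      ring
    rw [h5] at h4
    linarith
  have hYb : ∑ k, Y k * b k = lam' * ((∑ k, b k ^ 2) + ∑ k, b k * θp k) := by
    rw [← Finset.sum_add_distrib, Finset.mul_sum]
    apply Finset.sum_congr rfl
    intro k _
    rw [hb k]
    field_simp
    ring
  have hab : 0 ≤ ∑ k, a k * b k := by
    have h2' : 2 * ∑ k, a k * b k
        = (∑ k, b k ^ 2) + (1 / lam'' - 1 / lam') * ∑ k, Y k * b k := by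
      rw [Finset.mul_sum, Finset.mul_sum, ← Finset.sum_add_distrib]
      apply Finset.sum_congr rfl
      intro k _
      rw [ha k, hb k]
      field_simp
      ring
    have hpos : 0 < 1 / lam'' - 1 / lam' :=
      sub_pos.mpr (one_div_lt_one_div_of_lt h0 h1)
    have h5 : 0 ≤ (1 / lam'' - 1 / lam') * ∑ k, Y k * b k := by
      apply mul_nonneg hpos.le
      rw [hYb]
      exact mul_nonneg hlam'.le (add_nonneg hbb hbθp)
    linarith
  have hVIpθd : ∑ k, b k * (θd k - θp k) ≤ 0 := by
    have h4 := hVIp θd hθdF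
    have h5 : ∑ k, (Y k / lam' - θp k) * (θd k - θp k)
        = ∑ k, b k * (θd k - θp k) := by
      apply Finset.sum_congr rfl
      intro k _
      rw [hb k]
    rw [h5] at h4
    exact h4
  have hμ0 : 0 ≤ (∑ j, a j * b j) / ∑ j, b j ^ 2 := div_nonneg hab hbb
  have hd2 : ∑ k, (θd k - θp k) ^ 2 ≤ 2 * ∑ k, vv k * (θd k - θp k) := by
    have e1 : ∑ k, vv k * (θd k - θp k)
        = (∑ k, a k * (θd k - θp k))
          - ((∑ j, a j * b j) / ∑ j, b j ^ 2) * ∑ k, b k * (θd k - θp k) := by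
      rw [Finset.mul_sum, ← Finset.sum_sub_distrib]
      apply Finset.sum_congr rfl
      intro k _
      rw [hvv k]
      ring
    have e2 : 2 * ∑ k, a k * (θd k - θp k)
        = (∑ k, (Y k / lam'' - θd k) * (θd k - θp k)) + ∑ k, (θd k - θp k) ^ 2 := by
      rw [Finset.mul_sum, ← Finset.sum_add_distrib]
      apply Finset.sum_congr rfl
      intro k _
      rw [ha k]
      ring
    have e3 : 0 ≤ ∑ k, (Y k / lam'' - θd k) * (θd k - θp k) := by
      have e3' : ∑ k, (Y k / lam'' - θd k) * (θd k - θp k)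
          = - ∑ k, (Y k / lam'' - θd k) * (θp k - θd k) := by
        rw [← Finset.sum_neg_distrib]
        apply Finset.sum_congr rfl
        intro k _
        ring
      rw [e3']
      linarith [hVId]
    have e4 : ((∑ j, a j * b j) / ∑ j, b j ^ 2) * ∑ k, b k * (θd k - θp k) ≤ 0 :=
      mul_nonpos_of_nonneg_of_nonpos hμ0 hVIpθd
    linarith
  have hball : ∑ k, (θd k - o k) ^ 2 ≤ ∑ k, vv k ^ 2 := by
    have e5 : ∑ k, (θd k - o k) ^ 2
        = (∑ k, (θd k - θp k) ^ 2) - 2 * (∑ k, vv k * (θd k - θp k))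
          + ∑ k, vv k ^ 2 := by
      have hpt : ∀ k : Fin m, (θd k - o k) ^ 2
          = (θd k - θp k) ^ 2 - 2 * (vv k * (θd k - θp k)) + vv k ^ 2 := by
        intro k
        rw [ho k]
        ring
      rw [Finset.sum_congr rfl fun k _ => hpt k, Finset.sum_add_distrib,
        Finset.sum_sub_distrib, ← Finset.mul_sum]
    linarith
  have hfinal : lqNorm qb ((B i)ᵀ.mulVec θd) < 1 := by
    have heq : (B i)ᵀ.mulVec θd
        = fun x => (B i)ᵀ.mulVec o x + (B i)ᵀ.mulVec (fun k => θd k - o k) x := by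
      funext x
      rw [← mulVec_add'' (B i)ᵀ o (fun k => θd k - o k) x]
      congr 1
      funext k
      ring
    rw [heq]
    calc lqNorm qb (fun x => (B i)ᵀ.mulVec o x + (B i)ᵀ.mulVec (fun k => θd k - o k) x)
        ≤ lqNorm qb ((B i)ᵀ.mulVec o)
          + lqNorm qb ((B i)ᵀ.mulVec (fun k => θd k - o k)) :=
          lqNorm_add_le hqb _ _
    _ ≤ lqNorm qb ((B i)ᵀ.mulVec o)
          + TA qb (B i)ᵀ * Real.sqrt (∑ k, (θd k - o k) ^ 2) := by
        have := lqNorm_mulVec_le hqb (B i)ᵀ (fun k => θd k - o k)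
        linarith
    _ ≤ lqNorm qb ((B i)ᵀ.mulVec o)
          + TA qb (B i)ᵀ * Real.sqrt (∑ k, vv k ^ 2) := by
        have := mul_le_mul_of_nonneg_left (Real.sqrt_le_sqrt hball)
          (TA_nonneg hqb (B i)ᵀ)
        linarith
    _ < 1 := by linarith [hscr]
  by_contra hne
  have hpos : 0 < lqNorm q (W i) := lqNorm_pos hq hne
  have hg1 := hgrad_ge i
  have hg2 : ∑ k, R k * (B i).mulVec (W i) k
      = lam'' * ∑ x, (B i)ᵀ.mulVec θd x * W i x := by
    rw [← adjsum, Finset.mul_sum]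
    apply Finset.sum_congr rfl
    intro k _
    simp only [hθd]
    field_simp
  have hg3 : ∑ x, (B i)ᵀ.mulVec θd x * W i x
      ≤ lqNorm qb ((B i)ᵀ.mulVec θd) * lqNorm q (W i) := lqNorm_inner_le hq hconj _ _
  have hg4 : lqNorm qb ((B i)ᵀ.mulVec θd) * lqNorm q (W i) < 1 * lqNorm q (W i) :=
    mul_lt_mul_of_pos_right hfinal hpos
  have hg5 : ∑ x, (B i)ᵀ.mulVec θd x * W i x < lqNorm q (W i) := by linarith
  have hg6 : lam'' * ∑ x, (B i)ᵀ.mulVec θd x * W i x < lam'' * lqNorm q (W i) :=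
    mul_lt_mul_of_pos_left hg5 h0
  linarith
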